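/- Let u_n ⇀ u weakly in L²(ℝ^N), u_n → u almost everywhere, and q : ℝ → [0,∞) continuous with q(u_n) integrable. If ∫ m|u_n|² + q(u_n) dx → ∫ m|u|² + q(u) dx with m > 0 and ∫q(u) dx < ∞, then u_n → u strongly in L²(ℝ^N). -/

import Mathlib

open MeasureTheory Filter

/-- Fatou-type eventual lower bound for real integrals of a.e.-nonnegative
a.e.-convergent sequences. -/
lemma fatou_eventually {α : Type*} [MeasurableSpace α] {μ : Measure α}
    {f : ℕ → α → ℝ} {g : α → ℝ}
    (hf : ∀ n, Integrable (f n) μ) (hfnn : ∀ n, 0 ≤ᵐ[μ] f n)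
    (hg : Integrable g μ) (hgnn : 0 ≤ᵐ[μ] g)
    (hae : ∀ᵐ x ∂μ, Filter.Tendsto (fun n => f n x) atTop (nhds (g x)))
    {ε : ℝ} (hε : 0 < ε) :
    ∀ᶠ n in atTop, (∫ x, g x ∂μ) - ε < ∫ x, f n x ∂μ := by
  have hI : ∀ n, 0 ≤ ∫ x, f n x ∂μ := fun n => integral_nonneg_of_ae (hfnn n)
  rcases lt_or_ge ((∫ x, g x ∂μ) - ε) 0 with h | h
  · exact Eventually.of_forall fun n => lt_of_lt_of_le h (hI n)
  · -- work in ℝ≥0∞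
    have hglin : ∫⁻ x, ENNReal.ofReal (g x) ∂μ ≤
        liminf (fun n => ∫⁻ x, ENNReal.ofReal (f n x) ∂μ) atTop := by
      have h1 : ∫⁻ x, ENNReal.ofReal (g x) ∂μ ≤
          ∫⁻ x, liminf (fun n => ENNReal.ofReal (f n x)) atTop ∂μ := by
        refine lintegral_mono_ae (hae.mono fun x hx => ?_)
        have : Filter.Tendsto (fun n => ENNReal.ofReal (f n x)) atTop
            (nhds (ENNReal.ofReal (g x))) :=
          (ENNReal.continuous_ofReal.tendsto _).comp hx
        exact le_of_eq this.liminf_eq.symm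
      exact h1.trans (lintegral_liminf_le' fun n =>
        (ENNReal.measurable_ofReal.comp_aemeasurable (hf n).aestronglyMeasurable.aemeasurable))
    have heq : ∀ n, ∫ x, f n x ∂μ = (∫⁻ x, ENNReal.ofReal (f n x) ∂μ).toReal := fun n => by
      rw [integral_eq_lintegral_of_nonneg_ae (hfnn n) (hf n).aestronglyMeasurable]
    have hgeq : ∫ x, g x ∂μ = (∫⁻ x, ENNReal.ofReal (g x) ∂μ).toReal := by
      rw [integral_eq_lintegral_of_nonneg_ae hgnn hg.aestronglyMeasurable]
    have hkey : ENNReal.ofReal ((∫ x, g x ∂μ) - ε) <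
        liminf (fun n => ∫⁻ x, ENNReal.ofReal (f n x) ∂μ) atTop := by
      refine lt_of_lt_of_le ?_ hglin
      rw [hgeq] at h ⊢
      have hfin : (∫⁻ x, ENNReal.ofReal (g x) ∂μ) ≠ ⊤ := hg.lintegral_lt_top.ne
      calc ENNReal.ofReal ((∫⁻ x, ENNReal.ofReal (g x) ∂μ).toReal - ε)
          < ENNReal.ofReal ((∫⁻ x, ENNReal.ofReal (g x) ∂μ).toReal) :=
            (ENNReal.ofReal_lt_ofReal_iff (by linarith)).mpr (by linarith)
        _ = ∫⁻ x, ENNReal.ofReal (g x) ∂μ := ENNReal.ofReal_toReal hfin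
    have hev := Filter.eventually_lt_of_lt_liminf hkey
    refine hev.mono fun n hn => ?_
    have hfin : (∫⁻ x, ENNReal.ofReal (f n x) ∂μ) ≠ ⊤ := (hf n).lintegral_lt_top.ne
    have := ENNReal.toReal_strict_mono hfin hn
    rw [ENNReal.toReal_ofReal h] at this
    rw [heq n]
    exact this

/-- If `uₙ ⇀ u` weakly in `L²`, `uₙ → u` a.e., `q ≥ 0` is continuous, and
`∫ m|uₙ|² + q(uₙ) → ∫ m|u|² + q(u)` with `m > 0`, then `uₙ → u` strongly in `L²`. -/
theorem stmt_14 (N : ℕ) (m : ℝ) (hm : 0 < m)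
    (u : ℕ → EuclideanSpace ℝ (Fin N) → ℝ) (ulim : EuclideanSpace ℝ (Fin N) → ℝ)
    (hu2 : ∀ n, MemLp (u n) 2 (volume : Measure (EuclideanSpace ℝ (Fin N))))
    (hulim2 : MemLp ulim 2 (volume : Measure (EuclideanSpace ℝ (Fin N))))
    (hweak : ∀ φ : EuclideanSpace ℝ (Fin N) → ℝ,
      MemLp φ 2 (volume : Measure (EuclideanSpace ℝ (Fin N))) →
      Tendsto (fun n => ∫ x, u n x * φ x) atTop (nhds (∫ x, ulim x * φ x)))
    (hae : ∀ᵐ x : EuclideanSpace ℝ (Fin N), Tendsto (fun n => u n x) atTop (nhds (ulim x)))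
    (q : ℝ → ℝ) (hqcont : Continuous q) (hqnonneg : ∀ t, 0 ≤ q t)
    (hqint : ∀ n, Integrable (fun x : EuclideanSpace ℝ (Fin N) => q (u n x)))
    (hqlim : Integrable (fun x : EuclideanSpace ℝ (Fin N) => q (ulim x)))
    (hconv : Tendsto
      (fun n => ∫ x : EuclideanSpace ℝ (Fin N), (m * (u n x) ^ 2 + q (u n x)))
      atTop (nhds (∫ x : EuclideanSpace ℝ (Fin N), (m * (ulim x) ^ 2 + q (ulim x))))) :
    Tendsto (fun n => eLpNorm (fun x => u n x - ulim x) 2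
      (volume : Measure (EuclideanSpace ℝ (Fin N)))) atTop (nhds 0) := by
  set μ : Measure (EuclideanSpace ℝ (Fin N)) := volume
  -- notation
  set I : ℕ → ℝ := fun n => ∫ x, (u n x) ^ 2 ∂μ with hIdef
  set J : ℕ → ℝ := fun n => ∫ x, q (u n x) ∂μ with hJdef
  set Il : ℝ := ∫ x, (ulim x) ^ 2 ∂μ with hIldef
  set Jl : ℝ := ∫ x, q (ulim x) ∂μ with hJldef
  have husq : ∀ n, Integrable (fun x => (u n x) ^ 2) μ := fun n => (hu2 n).integrable_sq
  have hlsq : Integrable (fun x => (ulim x) ^ 2) μ := hulim2.integrable_sq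
  -- convergence of squares a.e. and of q ∘ u a.e.
  have haesq : ∀ᵐ x ∂μ, Tendsto (fun n => (u n x) ^ 2) atTop (nhds ((ulim x) ^ 2)) :=
    hae.mono fun x hx => (continuous_pow 2).continuousAt.tendsto.comp hx
  have haeq : ∀ᵐ x ∂μ, Tendsto (fun n => q (u n x)) atTop (nhds (q (ulim x))) :=
    hae.mono fun x hx => (hqcont.tendsto _).comp hx
  -- rewrite hconv as m I n + J n → m Il + Jl
  have hsplit : ∀ n, ∫ x, (m * (u n x) ^ 2 + q (u n x)) ∂μ = m * I n + J n := fun n => by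
    rw [integral_add ((husq n).const_mul m) (hqint n), integral_const_mul]
  have hsplitl : ∫ x, (m * (ulim x) ^ 2 + q (ulim x)) ∂μ = m * Il + Jl := by
    rw [integral_add (hlsq.const_mul m) hqlim, integral_const_mul]
  have hconv' : Tendsto (fun n => m * I n + J n) atTop (nhds (m * Il + Jl)) := by
    have := hconv
    simp only [hsplit, hsplitl] at this
    exact this
  -- Tendsto I → Il
  have hItendsto : Tendsto I atTop (nhds Il) := by
    refine tendsto_order.2 ⟨fun a ha => ?_, fun a ha => ?_⟩
    · -- lower bound via Fatou on squares
      have := fatou_eventually (f := fun n x => (u n x) ^ 2) (g := fun x => (ulim x) ^ 2)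
        husq (fun n => Eventually.of_forall fun x => sq_nonneg _) hlsq
        (Eventually.of_forall fun x => sq_nonneg _) haesq (ε := Il - a) (by linarith)
      exact this.mono fun n hn => by have hn' : Il - (Il - a) < I n := hn; linarith
    · -- upper bound via Fatou on q and convergence of the sum
      obtain ⟨ε, hεdef⟩ : ∃ ε : ℝ, ε = a - Il := ⟨_, rfl⟩
      have hε : 0 < ε := by rw [hεdef]; linarith
      have h1 : ∀ᶠ n in atTop, m * I n + J n < m * Il + Jl + m * ε / 2 := by
        have : Set.Iio (m * Il + Jl + m * ε / 2) ∈ nhds (m * Il + Jl) :=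
          Iio_mem_nhds (by nlinarith)
        exact hconv' this
      have h2 : ∀ᶠ n in atTop, Jl - m * ε / 2 < J n :=
        fatou_eventually hqint (fun n => Eventually.of_forall fun x => hqnonneg _)
          hqlim (Eventually.of_forall fun x => hqnonneg _) haeq (by positivity)
      filter_upwards [h1, h2] with n hn1 hn2
      have h3 : m * I n < m * Il + m * ε := by linarith only [hn1, hn2]
      have hIn : I n < Il + ε := by nlinarith only [h3, hm]
      linarith only [hIn, hεdef]
  -- weak convergence gives ∫ uₙ·ulim → ∫ ulim²
  have hP : Tendsto (fun n => ∫ x, u n x * ulim x ∂μ) atTop (nhds Il) := by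
    have := hweak ulim hulim2
    have heq : (∫ x, ulim x * ulim x ∂μ) = Il := by
      simp only [hIldef]; congr 1; ext x; ring
    rw [heq] at this
    exact this
  -- integrability of products
  have hmul : ∀ n, Integrable (fun x => u n x * ulim x) μ := by
    intro n
    refine Integrable.mono' (((husq n).add hlsq).const_mul (1/2 : ℝ))
      ((hu2 n).aestronglyMeasurable.mul hulim2.aestronglyMeasurable)
      (Eventually.of_forall fun x => ?_)
    have : ‖u n x * ulim x‖ = |u n x| * |ulim x| := by
      rw [Real.norm_eq_abs, abs_mul]
    rw [this]
    simp only [Pi.add_apply]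
    nlinarith [sq_nonneg (|u n x| - |ulim x|), sq_abs (u n x), sq_abs (ulim x)]
  -- the squared L² distance
  set D : ℕ → ℝ := fun n => ∫ x, (u n x - ulim x) ^ 2 ∂μ with hDdef
  have hDeq : ∀ n, D n = I n - 2 * (∫ x, u n x * ulim x ∂μ) + Il := by
    intro n
    have : (fun x => (u n x - ulim x) ^ 2)
        = fun x => (u n x) ^ 2 - 2 * (u n x * ulim x) + (ulim x) ^ 2 := by
      ext x; ring
    have hint2 : Integrable (fun x => 2 * (u n x * ulim x)) μ := (hmul n).const_mul 2
    have hint1 : Integrable (fun x => u n x ^ 2 - 2 * (u n x * ulim x)) μ :=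
      (husq n).sub hint2
    rw [hDdef]
    simp only [this]
    rw [integral_add hint1 hlsq, integral_sub (husq n) hint2, integral_const_mul]
  have hD0 : Tendsto D atTop (nhds 0) := by
    have : Tendsto (fun n => I n - 2 * (∫ x, u n x * ulim x ∂μ) + Il) atTop
        (nhds (Il - 2 * Il + Il)) :=
      ((hItendsto.sub (hP.const_mul 2)).add tendsto_const_nhds)
    simp only [← hDeq] at this
    convert this using 2
    ring
  -- convert to eLpNorm
  have hsub : ∀ n, MemLp (fun x => u n x - ulim x) 2 μ := fun n => (hu2 n).sub hulim2
  have help : ∀ n, eLpNorm (fun x => u n x - ulim x) 2 μ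
      = ENNReal.ofReal ((D n) ^ ((2:ℝ)⁻¹)) := by
    intro n
    rw [(hsub n).eLpNorm_eq_integral_rpow_norm (by norm_num) (by norm_num)]
    congr 1
    have : ∀ x, ‖u n x - ulim x‖ ^ (ENNReal.toReal 2) = (u n x - ulim x) ^ 2 := by
      intro x
      rw [ENNReal.toReal_ofNat, Real.norm_eq_abs]
      rw [show ((2:ℝ)) = ((2:ℕ):ℝ) by norm_num, Real.rpow_natCast]
      rw [sq_abs]
    simp only [this]
    rw [ENNReal.toReal_ofNat]
  simp only [help]
  have hDrpow : Tendsto (fun n => (D n) ^ ((2:ℝ)⁻¹)) atTop (nhds 0) := by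
    have h0 : (0:ℝ) = (0:ℝ) ^ ((2:ℝ)⁻¹) := by
      rw [Real.zero_rpow (by norm_num)]
    rw [h0]
    exact (Real.continuousAt_rpow_const 0 _ (Or.inr (by norm_num))).tendsto.comp hD0
  have := (ENNReal.continuous_ofReal.tendsto 0).comp hDrpow
  rw [ENNReal.ofReal_zero] at this
  exact this
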